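/- arXiv:0710.5518 — 2 statements merged into one kernel-verified Lean document; each statement's English description precedes it below -/
import Mathlib

section
/- In the presented group BV, for n ≥ 2 the Garside element Δ_{n+1} (image of the Garside element of B_{n+1} in BV via the σ_i) can be written as a word of length at most 6n − 7 in the generators {x_0, x_1, σ_1, τ_1} and their inverses. -/
/-- Generators of the braided Thompson group `BV`: `Sum.inl i` is `x_i` (for
`i ≥ 0`), `Sum.inr (Sum.inl a)` is `σ_{a+1}` and `Sum.inr (Sum.inr a)` is
`τ_{a+1}` (so that the σ- and τ-indices range over `i ≥ 1`). -/
abbrev BVGen : Type := ℕ ⊕ (ℕ ⊕ ℕ)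

namespace BVPres

/-- `x_i` in the free group on the generators of `BV`. -/
def X (i : ℕ) : FreeGroup BVGen := FreeGroup.of (Sum.inl i)

/-- `σ_{a+1}` in the free group on the generators of `BV`. -/
def S (a : ℕ) : FreeGroup BVGen := FreeGroup.of (Sum.inr (Sum.inl a))

/-- `τ_{a+1}` in the free group on the generators of `BV`. -/
def T (a : ℕ) : FreeGroup BVGen := FreeGroup.of (Sum.inr (Sum.inr a))

/-- The relators of the presentation of `BV` from Brady–Burillo–Cleary–Stein:
(A) `x_j x_i = x_i x_{j+1}` for `j > i`;
(B1) `σ_i σ_j = σ_j σ_i` for `j - i ≥ 2`;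
(B2) `σ_i σ_{i+1} σ_i = σ_{i+1} σ_i σ_{i+1}`;
(B3) `σ_i τ_j = τ_j σ_i` for `j - i ≥ 2`;
(B4) `σ_i τ_{i+1} σ_i = τ_{i+1} σ_i τ_{i+1}`;
(C1) `σ_i x_j = x_j σ_i` for `i < j`;
(C2) `σ_i x_i = x_{i-1} σ_{i+1} σ_i`;
(C3) `σ_i x_j = x_j σ_{i+1}` for `i ≥ j + 2`;
(C4) `σ_{i+1} x_i = x_{i+1} σ_{i+1} σ_{i+2}`;
(D1) `τ_i x_j = x_j τ_{i+1}` for `i - j ≥ 2`;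
(D2) `τ_i x_{i-1} = σ_i τ_{i+1}`;
(D3) `τ_i = x_{i-1} τ_{i+1} σ_i`.
Here σ- and τ-indices are `≥ 1` and are encoded as `a + 1`. -/
def bvRels : Set (FreeGroup BVGen) :=
  {r | (∃ i j : ℕ, i < j ∧ r = X j * X i * (X i * X (j + 1))⁻¹) ∨
       (∃ a b : ℕ, a + 2 ≤ b ∧ r = S a * S b * (S b * S a)⁻¹) ∨
       (∃ a : ℕ, r = S a * S (a + 1) * S a * (S (a + 1) * S a * S (a + 1))⁻¹) ∨
       (∃ a b : ℕ, a + 2 ≤ b ∧ r = S a * T b * (T b * S a)⁻¹) ∨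
       (∃ a : ℕ, r = S a * T (a + 1) * S a * (T (a + 1) * S a * T (a + 1))⁻¹) ∨
       (∃ a j : ℕ, a + 1 < j ∧ r = S a * X j * (X j * S a)⁻¹) ∨
       (∃ a : ℕ, r = S a * X (a + 1) * (X a * S (a + 1) * S a)⁻¹) ∨
       (∃ a j : ℕ, j + 1 ≤ a ∧ r = S a * X j * (X j * S (a + 1))⁻¹) ∨
       (∃ a : ℕ, r = S a * X a * (X (a + 1) * S a * S (a + 1))⁻¹) ∨
       (∃ a j : ℕ, j + 1 ≤ a ∧ r = T a * X j * (X j * T (a + 1))⁻¹) ∨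
       (∃ a : ℕ, r = T a * X a * (S a * T (a + 1))⁻¹) ∨
       (∃ a : ℕ, r = T a * (X a * T (a + 1) * S a)⁻¹)}

end BVPres

/-- The braided Thompson group `BV`, via the presentation of
Brady–Burillo–Cleary–Stein. -/
abbrev BV := PresentedGroup BVPres.bvRels

/-- The generator `x_i` of `BV` (for `i ≥ 0`). -/
def bvx (i : ℕ) : BV := PresentedGroup.of (Sum.inl i)

/-- The generator `σ_i` of `BV` (meaningful for `i ≥ 1`). -/
def bvσ (i : ℕ) : BV := PresentedGroup.of (Sum.inr (Sum.inl (i - 1)))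

/-- The generator `τ_i` of `BV` (meaningful for `i ≥ 1`). -/
def bvτ (i : ℕ) : BV := PresentedGroup.of (Sum.inr (Sum.inr (i - 1)))

/-- The image in `BV` of the Garside element `Δ_m` of the braid group `B_m`
under the homomorphism sending the `i`-th Artin generator to `σ_i`:
the product `(σ_1 ⋯ σ_{m-1})(σ_1 ⋯ σ_{m-2}) ⋯ (σ_1 σ_2) σ_1`. -/
def bvGarside (m : ℕ) : BV :=
  ((((List.range (m - 1)).reverse).map
      (fun k => ((List.range (k + 1)).map (fun i => bvσ (i + 1))).prod))).prod

/-- Word length with respect to a generating set (and inverses). -/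
noncomputable def wordLength {G : Type*} [Group G] (S : Set G) (g : G) : ℕ :=
  sInf {k | ∃ l : List G, (∀ x ∈ l, x ∈ S ∨ x⁻¹ ∈ S) ∧ l.prod = g ∧ l.length = k}

namespace BVProof

open BVPres

/-- The canonical projection onto `BV`. -/
def F : FreeGroup BVGen →* BV := PresentedGroup.mk BVPres.bvRels

lemma F_X (i : ℕ) : F (BVPres.X i) = bvx i := rfl
lemma F_S (a : ℕ) : F (BVPres.S a) = bvσ (a + 1) := rfl

lemma relq {L R : FreeGroup BVGen} (h : L * R⁻¹ ∈ BVPres.bvRels) : F L = F R := by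
  have h1 : F (L * R⁻¹) = 1 := by
    have h2 : L * R⁻¹ ∈ Subgroup.normalClosure BVPres.bvRels :=
      Subgroup.subset_normalClosure h
    exact (QuotientGroup.eq_one_iff _).mpr h2
  rw [map_mul, map_inv, mul_inv_eq_one] at h1
  exact h1

lemma rel_A (j : ℕ) : bvx (j + 1) * bvx 0 = bvx 0 * bvx (j + 2) := by
  have h := relq (L := X (j+1) * X 0) (R := X 0 * X (j+2))
    (Or.inl ⟨0, j + 1, Nat.succ_pos j, rfl⟩)
  simpa [map_mul, F_X] using h

lemma rel_B1 (a b : ℕ) (h : a + 2 ≤ b) :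
    bvσ (a + 1) * bvσ (b + 1) = bvσ (b + 1) * bvσ (a + 1) := by
  have h' := relq (L := S a * S b) (R := S b * S a) (Or.inr (Or.inl ⟨a, b, h, rfl⟩))
  simpa [map_mul, F_S] using h'

lemma rel_C1 (a j : ℕ) (h : a + 1 < j) :
    bvσ (a + 1) * bvx j = bvx j * bvσ (a + 1) := by
  have h' := relq (L := S a * X j) (R := X j * S a)
    (Or.inr (Or.inr (Or.inr (Or.inr (Or.inr (Or.inl ⟨a, j, h, rfl⟩))))))
  simpa [map_mul, F_X, F_S] using h'

lemma rel_C2 (a : ℕ) :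
    bvσ (a + 1) * bvx (a + 1) = bvx a * bvσ (a + 2) * bvσ (a + 1) := by
  have h' := relq (L := S a * X (a+1)) (R := X a * S (a+1) * S a)
    (Or.inr (Or.inr (Or.inr (Or.inr (Or.inr (Or.inr (Or.inl ⟨a, rfl⟩)))))))
  simpa [map_mul, F_X, F_S] using h'

/-- `σ_1 σ_2 ⋯ σ_k`. -/
def gam (k : ℕ) : BV := ((List.range k).map (fun i => bvσ (i + 1))).prod
/-- `σ_2 σ_3 ⋯ σ_{k+1}`. -/
def run2 (k : ℕ) : BV := ((List.range k).map (fun i => bvσ (i + 2))).prod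
/-- `(σ_2 σ_1)(σ_3 σ_2) ⋯ (σ_{k+1} σ_k)`. -/
def pp (k : ℕ) : BV := ((List.range k).map (fun i => bvσ (i + 2) * bvσ (i + 1))).prod
/-- `x_1 x_2 ⋯ x_k`. -/
def P (k : ℕ) : BV := ((List.range k).map (fun i => bvx (i + 1))).prod

lemma gam_succ (k : ℕ) : gam (k + 1) = gam k * bvσ (k + 1) := by
  simp [gam, List.range_succ]
lemma run2_succ (k : ℕ) : run2 (k + 1) = run2 k * bvσ (k + 2) := by
  simp [run2, List.range_succ]
lemma pp_succ (k : ℕ) : pp (k + 1) = pp k * (bvσ (k + 2) * bvσ (k + 1)) := by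
  simp [pp, List.range_succ]
lemma P_succ (k : ℕ) : P (k + 1) = P k * bvx (k + 1) := by
  simp [P, List.range_succ]

lemma garside_succ (m : ℕ) : bvGarside (m + 2) = gam (m + 1) * bvGarside (m + 1) := by
  show (((List.range (m + 1)).reverse).map _).prod = _
  rw [List.range_succ, List.reverse_append]
  simp [bvGarside, gam]

lemma garside_one : bvGarside 1 = 1 := rfl

lemma gam_run2 (k : ℕ) : gam (k + 1) = bvσ 1 * run2 k := by
  induction k with
  | zero => simp [gam, run2, List.range_succ]
  | succ k ih => rw [gam_succ, ih, run2_succ, mul_assoc]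

lemma gam_comm_s (m b : ℕ) (h : m ≤ b) : gam m * bvσ (b + 2) = bvσ (b + 2) * gam m := by
  induction m with
  | zero => simp [gam]
  | succ k ih =>
    have hb : bvσ (k + 1) * bvσ (b + 2) = bvσ (b + 2) * bvσ (k + 1) :=
      rel_B1 k (b + 1) (by omega)
    rw [gam_succ, mul_assoc, hb, ← mul_assoc, ih (by omega), mul_assoc]

lemma gam_comm_x (k j : ℕ) (h : k < j) : gam k * bvx j = bvx j * gam k := by
  induction k with
  | zero => simp [gam]
  | succ i ih =>
    have hb : bvσ (i + 1) * bvx j = bvx j * bvσ (i + 1) := rel_C1 i j (by omega)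
    rw [gam_succ, mul_assoc, hb, ← mul_assoc, ih (by omega), mul_assoc]

lemma flat (m : ℕ) : pp m = run2 m * gam m := by
  induction m with
  | zero => simp [pp, run2, gam]
  | succ k ih =>
    rw [pp_succ, ih, run2_succ, gam_succ]
    have hc : gam k * bvσ (k + 2) = bvσ (k + 2) * gam k := gam_comm_s k k le_rfl
    calc run2 k * gam k * (bvσ (k + 2) * bvσ (k + 1))
        = run2 k * (gam k * bvσ (k + 2)) * bvσ (k + 1) := by
          simp [mul_assoc]
      _ = run2 k * (bvσ (k + 2) * gam k) * bvσ (k + 1) := by rw [hc]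
      _ = run2 k * bvσ (k + 2) * (gam k * bvσ (k + 1)) := by simp [mul_assoc]

lemma push (m : ℕ) : gam (m + 1) * bvx (m + 1) = bvx 0 * pp (m + 1) := by
  induction m with
  | zero =>
    have h := rel_C2 0
    simp only [gam, pp, List.range_succ] at *
    simpa [mul_assoc] using h
  | succ k ih =>
    have h := rel_C2 (k + 1)
    rw [gam_succ, mul_assoc, h, pp_succ]
    calc gam (k + 1) * (bvx (k + 1) * bvσ (k + 3) * bvσ (k + 2))
        = (gam (k + 1) * bvx (k + 1)) * (bvσ (k + 3) * bvσ (k + 2)) := by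
          simp [mul_assoc]
      _ = (bvx 0 * pp (k + 1)) * (bvσ (k + 3) * bvσ (k + 2)) := by rw [ih]
      _ = bvx 0 * (pp (k + 1) * (bvσ (k + 3) * bvσ (k + 2))) := by simp [mul_assoc]

lemma garside_comm : ∀ m j : ℕ, m ≤ j → bvGarside m * bvx j = bvx j * bvGarside m
  | 0, j, _ => by simp [bvGarside]
  | 1, j, _ => by simp [garside_one]
  | (k + 2), j, h => by
    rw [garside_succ, mul_assoc, garside_comm (k + 1) j (by omega), ← mul_assoc,
      gam_comm_x (k + 1) j (by omega), mul_assoc]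

lemma Mlem : ∀ m : ℕ, bvGarside (m + 1) * bvx m = bvx 0 * run2 m * bvGarside (m + 1)
  | 0 => by simp [garside_one, run2]
  | (k + 1) => by
    rw [garside_succ, mul_assoc, garside_comm (k + 1) (k + 1) le_rfl, ← mul_assoc,
      push k, flat (k + 1)]
    simp [mul_assoc]

lemma Rlem (m : ℕ) :
    bvGarside (m + 2) = bvσ 1 * (bvx 0)⁻¹ * (bvGarside (m + 1) * bvx m) := by
  rw [Mlem m, garside_succ, gam_run2]
  simp [mul_assoc]

lemma Glem : ∀ k : ℕ, bvGarside (k + 2) = (bvσ 1 * (bvx 0)⁻¹) ^ k * bvσ 1 * P k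
  | 0 => by simp [garside_succ, garside_one, gam, List.range_succ, P]
  | (k + 1) => by
    rw [Rlem (k + 1), Glem k, P_succ, pow_succ']
    simp [mul_assoc]

lemma xconj : ∀ k : ℕ, bvx (k + 1) = ((bvx 0) ^ k)⁻¹ * bvx 1 * (bvx 0) ^ k
  | 0 => by simp
  | (k + 1) => by
    have h2 : bvx (k + 2) = (bvx 0)⁻¹ * (bvx (k + 1) * bvx 0) := by
      rw [rel_A k, inv_mul_cancel_left]
    rw [h2, xconj k]
    rw [pow_succ]
    group

lemma Pform : ∀ k : ℕ, P (k + 1) = (bvx 1 * (bvx 0)⁻¹) ^ k * bvx 1 * (bvx 0) ^ k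
  | 0 => by simp [P, List.range_succ]
  | (k + 1) => by
    rw [P_succ, Pform k, xconj (k + 1)]
    have h1 : (bvx 0) ^ k * ((bvx 0) ^ (k + 1))⁻¹ = (bvx 0)⁻¹ := by
      rw [pow_succ', mul_inv_rev, mul_inv_cancel_left]
    rw [pow_succ (bvx 1 * (bvx 0)⁻¹)]
    calc (bvx 1 * (bvx 0)⁻¹) ^ k * bvx 1 * (bvx 0) ^ k *
          (((bvx 0) ^ (k + 1))⁻¹ * bvx 1 * (bvx 0) ^ (k + 1))
        = (bvx 1 * (bvx 0)⁻¹) ^ k * bvx 1 *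
            (((bvx 0) ^ k * ((bvx 0) ^ (k + 1))⁻¹) * (bvx 1 * (bvx 0) ^ (k + 1))) := by
          simp [mul_assoc]
      _ = (bvx 1 * (bvx 0)⁻¹) ^ k * bvx 1 * ((bvx 0)⁻¹ * (bvx 1 * (bvx 0) ^ (k + 1))) := by
          rw [h1]
      _ = (bvx 1 * (bvx 0)⁻¹) ^ k * (bvx 1 * (bvx 0)⁻¹) * bvx 1 * (bvx 0) ^ (k + 1) := by
          simp [mul_assoc]

/-- Repeated pair list. -/
def rep2l (g h : BV) : ℕ → List BV
  | 0 => []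
  | (k + 1) => g :: h :: rep2l g h k

lemma rep2l_prod (g h : BV) : ∀ k, (rep2l g h k).prod = (g * h) ^ k
  | 0 => by simp [rep2l]
  | (k + 1) => by
    rw [pow_succ']
    simp [rep2l, rep2l_prod g h k, mul_assoc]

lemma rep2l_length (g h : BV) : ∀ k, (rep2l g h k).length = 2 * k
  | 0 => rfl
  | (k + 1) => by simp [rep2l, rep2l_length g h k]; omega

lemma rep2l_mem (g h : BV) : ∀ k, ∀ x ∈ rep2l g h k, x = g ∨ x = h
  | 0, x, hx => by simp [rep2l] at hx
  | (k + 1), x, hx => by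
    simp only [rep2l, List.mem_cons] at hx
    rcases hx with h1 | h1 | h1
    · exact Or.inl h1
    · exact Or.inr h1
    · exact rep2l_mem g h k x h1

end BVProof


/-- For `n ≥ 2`, the Garside element `Δ_{n+1}` (image in `BV` of the Garside
element of `B_{n+1}`) has word length at most `6n - 7` with respect to the
finite generating set `{x_0, x_1, σ_1, τ_1}`. -/
theorem bv_garside_length_le (n : ℕ) (hn : 2 ≤ n) :
    wordLength ({bvx 0, bvx 1, bvσ 1, bvτ 1} : Set BV) (bvGarside (n + 1))
      ≤ 6 * n - 7 := by
  obtain ⟨k, rfl⟩ : ∃ k, n = k + 2 := ⟨n - 2, by omega⟩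
  set S : Set BV := ({bvx 0, bvx 1, bvσ 1, bvτ 1} : Set BV) with hS
  set l : List BV := BVProof.rep2l (bvσ 1) (bvx 0)⁻¹ (k + 1) ++
      ([bvσ 1] ++ (BVProof.rep2l (bvx 1) (bvx 0)⁻¹ k ++
        ([bvx 1] ++ List.replicate k (bvx 0)))) with hl
  have hmem : ∀ x ∈ l, x ∈ S ∨ x⁻¹ ∈ S := by
    intro x hx
    have hx0 : x = bvσ 1 ∨ x = (bvx 0)⁻¹ ∨ x = bvx 1 ∨ x = bvx 0 := by
      rw [hl] at hx
      rcases List.mem_append.1 hx with h | h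
      · rcases BVProof.rep2l_mem _ _ _ x h with h1 | h1
        · exact Or.inl h1
        · exact Or.inr (Or.inl h1)
      rcases List.mem_append.1 h with h | h
      · exact Or.inl (List.mem_singleton.1 h)
      rcases List.mem_append.1 h with h | h
      · rcases BVProof.rep2l_mem _ _ _ x h with h1 | h1
        · exact Or.inr (Or.inr (Or.inl h1))
        · exact Or.inr (Or.inl h1)
      rcases List.mem_append.1 h with h | h
      · exact Or.inr (Or.inr (Or.inl (List.mem_singleton.1 h)))
      · exact Or.inr (Or.inr (Or.inr (List.eq_of_mem_replicate h)))
    rcases hx0 with rfl | rfl | rfl | rfl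
    · left; simp [hS]
    · right; rw [inv_inv]; simp [hS]
    · left; simp [hS]
    · left; simp [hS]
  have hprod : l.prod = bvGarside (k + 2 + 1) := by
    have hG := BVProof.Glem (k + 1)
    rw [BVProof.Pform k] at hG
    rw [hl]
    simp only [List.prod_append, List.prod_cons, List.prod_nil,
      BVProof.rep2l_prod, List.prod_replicate]
    rw [show (k + 2 + 1) = (k + 1 + 2) from rfl, hG]
    simp [mul_assoc]
  have hlen : l.length = 5 * k + 4 := by
    rw [hl]
    simp [BVProof.rep2l_length]
    omega
  have hmemset : (5 * k + 4) ∈ {m | ∃ l : List BV,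
      (∀ x ∈ l, x ∈ S ∨ x⁻¹ ∈ S) ∧ l.prod = bvGarside (k + 2 + 1) ∧ l.length = m} :=
    ⟨l, hmem, hprod, hlen⟩
  have hle := Nat.sInf_le hmemset
  calc wordLength S (bvGarside (k + 2 + 1)) ≤ 5 * k + 4 := hle
    _ ≤ 6 * (k + 2) - 7 := by omega
end

section
/- In the presented group BV, the relations C2 (σ_i x_i = x_{i−1} σ_{i+1} σ_i) and C3 (σ_i x_j = x_j σ_{i+1} for i ≥ j+2) imply σ_n = x_0^{1−n} σ_1 x_0^{n−1} · c_n for some word c_n in the generators whose length grows at most linearly in n; in particular, each σ_n and τ_n with n ≤ N can be written in the finite generators {x_0, x_1, σ_1, τ_1} with length at most C·N for an absolute constant C. -/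
namespace BVAux
open BVPres

lemma mk_eq {u v : FreeGroup BVGen} (h : u * v⁻¹ ∈ bvRels) :
    (QuotientGroup.mk u : BV) = QuotientGroup.mk v := by
  have h1 : (QuotientGroup.mk (u * v⁻¹) : BV) = 1 :=
    (QuotientGroup.eq_one_iff _).mpr (Subgroup.subset_normalClosure h)
  rw [QuotientGroup.mk_mul, QuotientGroup.mk_inv] at h1
  exact mul_inv_eq_one.mp h1

lemma mkS (a : ℕ) : (QuotientGroup.mk (S a) : BV) = bvσ (a + 1) := rfl

lemma mkT (a : ℕ) : (QuotientGroup.mk (T a) : BV) = bvτ (a + 1) := rfl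

lemma mkX (i : ℕ) : (QuotientGroup.mk (X i) : BV) = bvx i := rfl

lemma σ_step (a : ℕ) (ha : 1 ≤ a) : bvσ (a + 1) * bvx 0 = bvx 0 * bvσ (a + 2) := by
  have h := mk_eq (u := S a * X 0) (v := X 0 * S (a + 1))
    (by exact Or.inr <| Or.inr <| Or.inr <| Or.inr <| Or.inr <| Or.inr <| Or.inr <|
      Or.inl ⟨a, 0, by omega, rfl⟩)
  simp [QuotientGroup.mk_mul, mkS, mkX] at h; exact h

lemma σ2 : bvσ 1 * bvx 1 = bvx 0 * bvσ 2 * bvσ 1 := by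
  have h := mk_eq (u := S 0 * X 1) (v := X 0 * S 1 * S 0)
    (by exact Or.inr <| Or.inr <| Or.inr <| Or.inr <| Or.inr <| Or.inr <|
      Or.inl ⟨0, rfl⟩)
  simp [QuotientGroup.mk_mul, mkS, mkX] at h; exact h

lemma τ_step (a : ℕ) (ha : 1 ≤ a) : bvτ (a + 1) * bvx 0 = bvx 0 * bvτ (a + 2) := by
  have h := mk_eq (u := T a * X 0) (v := X 0 * T (a + 1))
    (by exact Or.inr <| Or.inr <| Or.inr <| Or.inr <| Or.inr <| Or.inr <| Or.inr <|
      Or.inr <| Or.inr <| Or.inl ⟨a, 0, by omega, rfl⟩)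
  simp [QuotientGroup.mk_mul, mkT, mkX] at h; exact h

lemma τ1 : bvτ 1 = bvx 0 * bvτ 2 * bvσ 1 := by
  have h := mk_eq (u := T 0) (v := X 0 * T 1 * S 0)
    (by exact Or.inr <| Or.inr <| Or.inr <| Or.inr <| Or.inr <| Or.inr <| Or.inr <|
      Or.inr <| Or.inr <| Or.inr <| Or.inr ⟨0, rfl⟩)
  simp [QuotientGroup.mk_mul, mkT, mkS, mkX] at h; exact h

lemma σform (m : ℕ) :
    bvσ (m + 2) = ((bvx 0)⁻¹) ^ (m + 1) * bvσ 1 * bvx 1 * (bvσ 1)⁻¹ * (bvx 0) ^ m := by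
  induction m with
  | zero =>
    rw [pow_zero, mul_one, zero_add, pow_one, eq_mul_inv_iff_mul_eq, mul_assoc,
      eq_inv_mul_iff_mul_eq]
    simpa [mul_assoc] using σ2.symm
  | succ m ih =>
    have h := σ_step (m + 1) (by omega)
    have h2 : bvσ (m + 3) = (bvx 0)⁻¹ * bvσ (m + 2) * bvx 0 := by
      rw [mul_assoc, eq_inv_mul_iff_mul_eq]; exact h.symm
    show bvσ (m + 3) = _
    rw [h2, ih]
    group

lemma τform (m : ℕ) :
    bvτ (m + 2) = ((bvx 0)⁻¹) ^ (m + 1) * bvτ 1 * (bvσ 1)⁻¹ * (bvx 0) ^ m := by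
  induction m with
  | zero =>
    simp only [pow_one, pow_zero, mul_one]
    rw [τ1]; group
  | succ m ih =>
    have h := τ_step (m + 1) (by omega)
    have h2 : bvτ (m + 3) = (bvx 0)⁻¹ * bvτ (m + 2) * bvx 0 := by
      rw [mul_assoc, eq_inv_mul_iff_mul_eq]; exact h.symm
    show bvτ (m + 3) = _
    rw [h2, ih]
    group

end BVAux


namespace BVAux

lemma wordLength_le {G : Type*} [Group G] (S : Set G) (l : List G)
    (h : ∀ x ∈ l, x ∈ S ∨ x⁻¹ ∈ S) : wordLength S l.prod ≤ l.length :=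
  Nat.sInf_le ⟨l, h, rfl, rfl⟩

lemma wordLength_le' {G : Type*} [Group G] (S : Set G) (g : G) (l : List G)
    (h : ∀ x ∈ l, x ∈ S ∨ x⁻¹ ∈ S) (hp : l.prod = g) (k : ℕ) (hk : l.length ≤ k) :
    wordLength S g ≤ k := hp ▸ (le_trans (wordLength_le S l h) hk)

def Sfin : Set BV := {bvx 0, bvx 1, bvσ 1, bvτ 1}

lemma mem_lists (x : BV) (m : ℕ)
    (hx : x ∈ List.replicate (m+1) (bvx 0)⁻¹ ++ [bvσ 1, bvx 1, (bvσ 1)⁻¹, bvτ 1] ++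
      List.replicate m (bvx 0)) : x ∈ Sfin ∨ x⁻¹ ∈ Sfin := by
  simp only [List.mem_append, List.mem_replicate, List.mem_cons, List.not_mem_nil, or_false] at hx
  rcases hx with (⟨-, rfl⟩ | (rfl | rfl | rfl | rfl)) | ⟨-, rfl⟩ <;>
    simp [Sfin, Set.mem_insert_iff]

end BVAux


/-- In `BV`, each `σ_n` can be written as `x_0^{1-n} σ_1 x_0^{n-1} · c_n` with
`c_n` a word in the finite generators `{x_0, x_1, σ_1, τ_1}` of length at most
linear in `n`; in particular every `σ_n` and `τ_n` with `1 ≤ n ≤ N` has word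
length at most `C · N` in the finite generators, for an absolute constant `C`. -/
theorem bv_infinite_generators_linear_length :
    (∃ C : ℕ, 0 < C ∧ ∀ n : ℕ, 1 ≤ n → ∃ c : BV,
        bvσ n = bvx 0 ^ (1 - (n : ℤ)) * bvσ 1 * bvx 0 ^ ((n : ℤ) - 1) * c ∧
        wordLength ({bvx 0, bvx 1, bvσ 1, bvτ 1} : Set BV) c ≤ C * n) ∧
    (∃ C : ℕ, ∀ N n : ℕ, 1 ≤ n → n ≤ N →
        wordLength ({bvx 0, bvx 1, bvσ 1, bvτ 1} : Set BV) (bvσ n) ≤ C * N ∧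
        wordLength ({bvx 0, bvx 1, bvσ 1, bvτ 1} : Set BV) (bvτ n) ≤ C * N) := by
  have hS : ({bvx 0, bvx 1, bvσ 1, bvτ 1} : Set BV) = BVAux.Sfin := rfl
  constructor
  · refine ⟨3, by norm_num, fun n hn => ?_⟩
    match n, hn with
    | 1, _ =>
      refine ⟨1, by simp, ?_⟩
      rw [hS]
      exact BVAux.wordLength_le' _ _ [] (by simp) (by simp) _ (by simp)
    | (m + 2), _ =>
      refine ⟨((bvx 0)⁻¹) ^ (m + 1) * bvx 1 * (bvσ 1)⁻¹ * (bvx 0) ^ m, ?_, ?_⟩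
      · have e1 : (1 - ((m + 2 : ℕ) : ℤ)) = -((m + 1 : ℕ) : ℤ) := by push_cast; ring
        have e2 : (((m + 2 : ℕ) : ℤ) - 1) = ((m + 1 : ℕ) : ℤ) := by push_cast; ring
        rw [e1, e2, zpow_neg, zpow_natCast, BVAux.σform]
        group
      · rw [hS]
        refine BVAux.wordLength_le' _ _
          (List.replicate (m+1) (bvx 0)⁻¹ ++ [bvx 1, (bvσ 1)⁻¹] ++ List.replicate m (bvx 0))
          ?_ ?_ _ ?_
        · intro x hx
          simp only [List.mem_append, List.mem_replicate, List.mem_cons,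
            List.not_mem_nil, or_false] at hx
          rcases hx with (⟨-, rfl⟩ | (rfl | rfl)) | ⟨-, rfl⟩ <;>
            simp [BVAux.Sfin, Set.mem_insert_iff]
        · simp [List.prod_replicate, mul_assoc]
        · simp; omega
  · refine ⟨3, fun N n hn hN => ?_⟩
    rw [hS]
    match n, hn with
    | 1, _ =>
      constructor
      · exact BVAux.wordLength_le' _ _ [bvσ 1] (by simp [BVAux.Sfin]) (by simp) _ (by simp; omega)
      · exact BVAux.wordLength_le' _ _ [bvτ 1] (by simp [BVAux.Sfin]) (by simp) _ (by simp; omega)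
    | (m + 2), _ =>
      constructor
      · refine BVAux.wordLength_le' _ _
          (List.replicate (m+1) (bvx 0)⁻¹ ++ [bvσ 1, bvx 1, (bvσ 1)⁻¹] ++ List.replicate m (bvx 0))
          ?_ ?_ _ ?_
        · intro x hx
          simp only [List.mem_append, List.mem_replicate, List.mem_cons,
            List.not_mem_nil, or_false] at hx
          rcases hx with (⟨-, rfl⟩ | (rfl | rfl | rfl)) | ⟨-, rfl⟩ <;>
            simp [BVAux.Sfin, Set.mem_insert_iff]
        · rw [BVAux.σform]; simp [List.prod_replicate, mul_assoc]
        · simp; omega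
      · refine BVAux.wordLength_le' _ _
          (List.replicate (m+1) (bvx 0)⁻¹ ++ [bvτ 1, (bvσ 1)⁻¹] ++ List.replicate m (bvx 0))
          ?_ ?_ _ ?_
        · intro x hx
          simp only [List.mem_append, List.mem_replicate, List.mem_cons,
            List.not_mem_nil, or_false] at hx
          rcases hx with (⟨-, rfl⟩ | (rfl | rfl)) | ⟨-, rfl⟩ <;>
            simp [BVAux.Sfin, Set.mem_insert_iff]
        · rw [BVAux.τform]; simp [List.prod_replicate, mul_assoc]
        · simp; omega
end
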